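/- Let κ, t, ℓ be positive integers with ℓ < t and 16t ≤ κ, and let H be a K_{t,t}-free simple graph on κ vertices. Then the number of 2ℓ-element vertex subsets of H that induce a clique is at most (2·e^{−ℓ²/(16t)}) · C(κ,ℓ) · C(κ−ℓ,ℓ) / C(2ℓ,ℓ). -/

import Mathlib

open Finset
open scoped Classical

namespace Stmt13

variable {V : Type} [Fintype V]

/-- An embedding of `V` into `ℕ`, used to rank elements. -/
noncomputable def er (V : Type) [Fintype V] : V ↪ ℕ :=
  (Fintype.equivFin V).toEmbedding.trans Fin.valEmbedding

/-- rank of `v` inside a finset `A`. -/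
noncomputable def rk (A : Finset V) (v : V) : ℕ :=
  #(A.filter fun w => er V w < er V v)

lemma rk_lt {A : Finset V} {v : V} (hv : v ∈ A) : rk A v < #A := by
  apply card_lt_card
  refine ⟨filter_subset _ _, fun hsub => ?_⟩
  have := hsub hv
  simp at this

lemma rk_lt_rk {A : Finset V} {v w : V} (hv : v ∈ A) (h : er V v < er V w) :
    rk A v < rk A w := by
  apply card_lt_card
  constructor
  · intro x hx
    simp only [mem_filter] at hx ⊢
    exact ⟨hx.1, hx.2.trans h⟩
  · intro hsub
    have := hsub (by simp only [mem_filter]; exact ⟨hv, h⟩)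
    simp at this

lemma rk_injOn (A : Finset V) : Set.InjOn (rk A) A := by
  intro v hv w hw hvw
  by_contra hne
  have hne' : er V v ≠ er V w := fun h => hne ((er V).injective h)
  rcases lt_or_gt_of_ne hne' with h | h
  · exact absurd hvw (Nat.ne_of_lt (rk_lt_rk (by simpa using hv) h))
  · exact absurd hvw.symm (Nat.ne_of_lt (rk_lt_rk (by simpa using hw) h))

variable (H : SimpleGraph V)

/-- common neighbourhood of the first `i` entries of the tuple `f`. -/
noncomputable def cnb {ℓ : ℕ} (f : Fin ℓ → V) (i : ℕ) : Finset V :=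
  univ.filter fun v => ∀ j : Fin ℓ, (j : ℕ) < i → H.Adj (f j) v

/-- the set of "heavy" vertices for a set `X`. -/
noncomputable def heavySet (t : ℕ) (X : Finset V) : Finset V :=
  univ.filter fun v => t * #(X.filter fun w => ¬ H.Adj v w) + 2 * t < #X

variable {H}

lemma cnb_congr {ℓ : ℕ} {f g : Fin ℓ → V} {i : ℕ}
    (h : ∀ j : Fin ℓ, (j : ℕ) < i → f j = g j) : cnb H f i = cnb H g i := by
  apply filter_congr
  intro v _
  constructor <;> intro hv j hj
  · rw [← h j hj]; exact hv j hj
  · rw [h j hj]; exact hv j hj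

lemma cnb_subset {ℓ : ℕ} (f : Fin ℓ → V) {i j : ℕ} (hij : i ≤ j) :
    cnb H f j ⊆ cnb H f i := by
  intro v hv
  simp only [cnb, mem_filter] at hv ⊢
  exact ⟨hv.1, fun k hk => hv.2 k (lt_of_lt_of_le hk hij)⟩

lemma cnb_succ {ℓ : ℕ} (f : Fin ℓ → V) {i : ℕ} (hi : i < ℓ) :
    cnb H f (i + 1) = (cnb H f i).filter fun w => H.Adj (f ⟨i, hi⟩) w := by
  ext v
  simp only [cnb, mem_filter, mem_univ, true_and]
  constructor
  · intro hv
    exact ⟨fun j hj => hv j (hj.trans (Nat.lt_succ_self i)), hv ⟨i, hi⟩ (Nat.lt_succ_self i)⟩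
  · rintro ⟨hv, ha⟩ j hj
    rcases Nat.lt_succ_iff_lt_or_eq.mp hj with h | h
    · exact hv j h
    · have : j = ⟨i, hi⟩ := Fin.ext h
      rw [this]; exact ha


lemma card_heavySet_lt
    (hfree : ¬ ∃ A B : Finset V, Disjoint A B ∧ A.card = t ∧ B.card = t ∧
      ∀ a ∈ A, ∀ b ∈ B, H.Adj a b) (ht : 0 < t) (X : Finset V) :
    #(heavySet H t X) < t := by
  by_contra hcon
  push_neg at hcon
  obtain ⟨A', hA'sub, hA'card⟩ := exists_subset_card_eq hcon
  have hmem : ∀ v ∈ A', t * #(X.filter fun w => ¬ H.Adj v w) + 2 * t + 1 ≤ #X := by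
    intro v hv
    have := hA'sub hv
    simp only [heavySet, mem_filter] at this
    omega
  set D : Finset V := A'.biUnion (fun v => X.filter fun w => ¬ H.Adj v w) with hD
  have hDcard : t * #D + t * (2 * t + 1) ≤ t * #X := by
    have h1 : #D ≤ ∑ v ∈ A', #(X.filter fun w => ¬ H.Adj v w) := card_biUnion_le
    have h2 : ∑ v ∈ A', (t * #(X.filter fun w => ¬ H.Adj v w) + (2 * t + 1)) ≤
        ∑ v ∈ A', #X := by
      apply sum_le_sum
      intro v hv
      have := hmem v hv
      omega
    rw [sum_add_distrib, sum_const, sum_const, hA'card, ← mul_sum] at h2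
    have h3 : t * #D ≤ t * ∑ v ∈ A', #(X.filter fun w => ¬ H.Adj v w) :=
      Nat.mul_le_mul_left t h1
    have h4 : t * (2 * t + 1) ≤ t • (2 * t + 1) := by simp
    simp only [smul_eq_mul] at h2
    calc t * #D + t * (2 * t + 1) ≤
        t * (∑ v ∈ A', #(X.filter fun w => ¬ H.Adj v w)) + t * (2 * t + 1) := by omega
      _ ≤ t * #X := by omega
  have hDX : #D + 2 * t + 1 ≤ #X := by
    have hdist : t * (#D + (2 * t + 1)) = t * #D + t * (2 * t + 1) := Nat.mul_add _ _ _
    have := Nat.le_of_mul_le_mul_left (by omega : t * (#D + (2 * t + 1)) ≤ t * #X) ht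
    omega
  have hXD : t + 1 ≤ #((X \ D) \ A') := by
    have h1 : #X - #D ≤ #(X \ D) := le_card_sdiff D X
    have h2 : #(X \ D) - #A' ≤ #((X \ D) \ A') := le_card_sdiff A' (X \ D)
    omega
  obtain ⟨B', hB'sub, hB'card⟩ := exists_subset_card_eq (show t ≤ #((X \ D) \ A') by omega)
  apply hfree
  refine ⟨A', B', ?_, hA'card, hB'card, ?_⟩
  · rw [disjoint_right]
    intro b hb
    have := hB'sub hb
    simp only [mem_sdiff] at this
    exact this.2
  · intro a ha b hb
    have hb' := hB'sub hb
    simp only [mem_sdiff] at hb'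
    obtain ⟨⟨hbX, hbD⟩, -⟩ := hb'
    by_contra hadj
    exact hbD (mem_biUnion.mpr ⟨a, ha, by simp [hbX, hadj]⟩)



noncomputable def dr (H : SimpleGraph V) {ℓ : ℕ} (f : Fin ℓ → V) (i : ℕ) : ℕ :=
  #(cnb H f i) - #(cnb H f (i + 1))

lemma dr_add {H : SimpleGraph V} {ℓ : ℕ} (f : Fin ℓ → V) (i : ℕ) :
    #(cnb H f (i + 1)) + dr H f i = #(cnb H f i) := by
  have h := card_le_card (cnb_subset (H := H) f (Nat.le_add_right i 1))
  unfold dr; omega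

lemma cnb_zero {H : SimpleGraph V} {ℓ : ℕ} (f : Fin ℓ → V) : cnb H f 0 = univ := by
  simp [cnb]

lemma telescope {H : SimpleGraph V} {ℓ : ℕ} (f : Fin ℓ → V) :
    ∀ j, #(cnb H f j) + ∑ i ∈ range j, dr H f i = Fintype.card V := by
  intro j
  induction j with
  | zero => simp [cnb_zero]
  | succ j ih =>
    rw [sum_range_succ]
    have := dr_add (H := H) f j
    omega

lemma good_step {H : SimpleGraph V} {ℓ : ℕ} {f : Fin ℓ → V} {i : ℕ} (hi : i < ℓ) {t : ℕ}
    (hgood : f ⟨i, hi⟩ ∉ heavySet H t (cnb H f i)) :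
    #(cnb H f i) ≤ t * dr H f i + 2 * t := by
  simp only [heavySet, mem_filter, mem_univ, true_and, not_lt] at hgood
  have hsplit : #((cnb H f i).filter fun w => H.Adj (f ⟨i, hi⟩) w)
      + #((cnb H f i).filter fun w => ¬ H.Adj (f ⟨i, hi⟩) w) = #(cnb H f i) :=
    card_filter_add_card_filter_not _
  rw [← cnb_succ f hi] at hsplit
  have hda := dr_add (H := H) f i
  have hc : #((cnb H f i).filter fun w => ¬ H.Adj (f ⟨i, hi⟩) w) = dr H f i := by omega
  rw [hc] at hgood
  exact hgood

lemma few_heavy_small_cnb {H : SimpleGraph V} {ℓ t : ℕ} (hℓ : 0 < ℓ) (hlt : ℓ ≤ t)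
    (htκ : 16 * t ≤ Fintype.card V) (f : Fin ℓ → V)
    (hfew : 2 * #(univ.filter fun i : Fin ℓ => f i ∈ heavySet H t (cnb H f (i : ℕ))) ≤ ℓ) :
    8 * t * #(cnb H f ℓ) + Fintype.card V * ℓ ≤ 8 * t * Fintype.card V := by
  set κ := Fintype.card V with hκdef
  set x := #(cnb H f ℓ) with hxdef
  by_contra hcon
  push_neg at hcon
  set G := univ.filter fun i : Fin ℓ => f i ∉ heavySet H t (cnb H f (i : ℕ)) with hGdef
  set g := #G with hgdef
  set Dv := ∑ i ∈ range ℓ, dr H f i with hDvdef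
  have hstep : ∀ i ∈ G, x ≤ t * dr H f (i : ℕ) + 2 * t := by
    intro i hi
    simp only [hGdef, mem_filter] at hi
    have h1 : x ≤ #(cnb H f (i : ℕ)) :=
      card_le_card (cnb_subset (H := H) f (le_of_lt i.isLt))
    exact h1.trans (good_step i.isLt hi.2)
  have A2 : g * x ≤ t * Dv + g * (2 * t) := by
    have c1 : g * x ≤ ∑ i ∈ G, (t * dr H f (i : ℕ) + 2 * t) := by
      calc g * x = ∑ _i ∈ G, x := by rw [sum_const, smul_eq_mul]
        _ ≤ _ := sum_le_sum hstep
    have c2 : ∑ i ∈ G, (t * dr H f (i : ℕ) + 2 * t)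
        = (∑ i ∈ G, t * dr H f (i : ℕ)) + g * (2 * t) := by
      rw [sum_add_distrib, sum_const, smul_eq_mul]
    have c3 : ∑ i ∈ G, t * dr H f (i : ℕ) ≤ t * Dv := by
      rw [hDvdef, ← Fin.sum_univ_eq_sum_range (fun i => dr H f i) ℓ, mul_sum]
      apply sum_le_sum_of_subset (subset_univ G)
    calc g * x ≤ (∑ i ∈ G, t * dr H f (i : ℕ)) + g * (2 * t) := by rw [← c2]; exact c1
      _ ≤ t * Dv + g * (2 * t) := Nat.add_le_add_right c3 _
  have A1 : x + Dv = κ := telescope f ℓ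
  have A3 : ℓ ≤ 2 * g := by
    have h1 : G = univ \ univ.filter (fun i : Fin ℓ => f i ∈ heavySet H t (cnb H f (i : ℕ))) := by
      rw [hGdef, filter_not]
    have hle := card_le_card
      (filter_subset (fun i : Fin ℓ => f i ∈ heavySet H t (cnb H f (i : ℕ))) univ)
    rw [card_univ, Fintype.card_fin] at hle
    have h2 : g + #(univ.filter fun i : Fin ℓ => f i ∈ heavySet H t (cnb H f (i : ℕ))) = ℓ := by
      rw [hgdef, h1, card_sdiff_of_subset (filter_subset _ _), card_univ, Fintype.card_fin]
      omega
    omega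
  have A4 : g ≤ ℓ := by
    have : G ⊆ univ := subset_univ G
    have := card_le_card this
    simpa [card_univ] using this
  -- arithmetic contradiction
  have ht0 : 0 < t := lt_of_lt_of_le hℓ hlt
  have e1 : t * (8 * κ) < t * (8 * x + κ) := by
    have h5 : κ * ℓ ≤ κ * t := Nat.mul_le_mul_left κ hlt
    calc t * (8 * κ) = 8 * t * κ := by ring
      _ < 8 * t * x + κ * ℓ := hcon
      _ ≤ 8 * t * x + κ * t := by omega
      _ = t * (8 * x + κ) := by ring
  have e2 : 8 * κ < 8 * x + κ := Nat.lt_of_mul_lt_mul_left e1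
  have h6 : 6 * κ + 16 * t < 8 * x := by omega
  have hgpos : 0 < g := by omega
  have e3 : g * (6 * κ + 16 * t) < g * (8 * x) := by
    exact mul_lt_mul_of_pos_left h6 hgpos
  have e4 : g * (8 * x) ≤ 8 * (t * Dv) + 16 * t * g := by
    calc g * (8 * x) = 8 * (g * x) := by ring
      _ ≤ 8 * (t * Dv + g * (2 * t)) := Nat.mul_le_mul_left 8 A2
      _ = 8 * (t * Dv) + 16 * t * g := by ring
  have e5 : 6 * (g * κ) < 8 * (t * Dv) := by
    have hh : g * (6 * κ + 16 * t) = 6 * (g * κ) + 16 * t * g := by ring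
    omega
  have e6 : 6 * (κ * ℓ) ≤ 12 * (g * κ) := by
    calc 6 * (κ * ℓ) ≤ 6 * (κ * (2 * g)) :=
          Nat.mul_le_mul_left 6 (Nat.mul_le_mul_left κ A3)
      _ = 12 * (g * κ) := by ring
  have e7 : 8 * (t * Dv) < κ * ℓ := by
    have hA8' : 8 * t * (x + Dv) < 8 * t * x + κ * ℓ := by rw [A1]; exact hcon
    have hexp : 8 * t * (x + Dv) = 8 * t * x + 8 * (t * Dv) := by ring
    omega
  have hκℓpos : 0 < κ * ℓ := Nat.mul_pos (by omega) hℓ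
  omega


lemma card_FP_le {H : SimpleGraph V} {t ℓ : ℕ}
    (hfree : ¬ ∃ A B : Finset V, Disjoint A B ∧ A.card = t ∧ B.card = t ∧
      ∀ a ∈ A, ∀ b ∈ B, H.Adj a b) (ht : 0 < t) (P : Finset (Fin ℓ)) :
    #((univ : Finset (Fin ℓ ↪ V)).filter fun f : Fin ℓ ↪ V =>
        ∀ i ∈ P, f i ∈ heavySet H t (cnb H ⇑f (i : ℕ))) ≤
      (t - 1) ^ #P * Fintype.card V ^ (ℓ - #P) := by
  have hcard : #(Fintype.piFinset fun i : Fin ℓ =>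
      range (if i ∈ P then t - 1 else Fintype.card V)) =
      (t - 1) ^ #P * Fintype.card V ^ (ℓ - #P) := by
    rw [Fintype.card_piFinset]
    have h1 : ∀ i : Fin ℓ, #(range (if i ∈ P then t - 1 else Fintype.card V)) =
        (if i ∈ P then t - 1 else Fintype.card V) := fun i => card_range _
    rw [Finset.prod_congr rfl (fun i _ => h1 i), ← Finset.prod_sdiff (subset_univ P)]
    have h2 : ∏ i ∈ univ \ P, (if i ∈ P then t - 1 else Fintype.card V)
        = Fintype.card V ^ (ℓ - #P) := by
      rw [Finset.prod_congr rfl (fun i hi => if_neg (mem_sdiff.mp hi).2), prod_const,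
        card_sdiff_of_subset (subset_univ P), card_univ, Fintype.card_fin]
    have h3 : ∏ i ∈ P, (if i ∈ P then t - 1 else Fintype.card V) = (t - 1) ^ #P := by
      rw [Finset.prod_congr rfl (fun i hi => if_pos hi), prod_const]
    rw [h2, h3, mul_comm]
  rw [← hcard]
  apply card_le_card_of_injOn
    (fun (f : Fin ℓ ↪ V) (i : Fin ℓ) =>
      rk (if i ∈ P then heavySet H t (cnb H ⇑f (i : ℕ)) else univ) (f i))
  · intro f hf
    rw [mem_coe, Fintype.mem_piFinset]
    intro i
    rw [mem_range]
    by_cases hP : i ∈ P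
    · simp only [if_pos hP]
      have h1 : f i ∈ heavySet H t (cnb H ⇑f (i : ℕ)) := (mem_filter.mp hf).2 i hP
      have h2 := rk_lt h1
      have h3 := card_heavySet_lt hfree ht (cnb H ⇑f (i : ℕ))
      omega
    · simp only [if_neg hP]
      have h2 := rk_lt (mem_univ (f i))
      rwa [card_univ] at h2
  · intro f hf g hg heq
    simp only [mem_coe, mem_filter] at hf hg
    have key : ∀ n, ∀ hn : n < ℓ, f ⟨n, hn⟩ = g ⟨n, hn⟩ := by
      intro n
      induction n using Nat.strong_induction_on with
      | _ n ih =>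
        intro hn
        have hpre : ∀ j : Fin ℓ, (j : ℕ) < n → (⇑f) j = (⇑g) j := by
          intro j hj
          have := ih (j : ℕ) hj j.isLt
          simpa using this
        have hX : cnb H ⇑f n = cnb H ⇑g n := cnb_congr hpre
        have hrk := congrFun heq ⟨n, hn⟩
        simp only [Fin.val_mk] at hrk
        by_cases hP : (⟨n, hn⟩ : Fin ℓ) ∈ P
        · simp only [if_pos hP] at hrk
          rw [hX] at hrk
          have hfm : f ⟨n, hn⟩ ∈ heavySet H t (cnb H ⇑g n) := by
            rw [← hX]
            simpa using hf.2 _ hP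
          have hgm : g ⟨n, hn⟩ ∈ heavySet H t (cnb H ⇑g n) := by
            simpa using hg.2 _ hP
          exact rk_injOn _ (mem_coe.mpr hfm) (mem_coe.mpr hgm) hrk
        · simp only [if_neg hP] at hrk
          exact rk_injOn univ (mem_coe.mpr (mem_univ _)) (mem_coe.mpr (mem_univ _)) hrk
    apply DFunLike.ext
    intro i
    have := key i.val i.isLt
    simpa using this

lemma card_E2_le {H : SimpleGraph V} {t ℓ : ℕ}
    (hfree : ¬ ∃ A B : Finset V, Disjoint A B ∧ A.card = t ∧ B.card = t ∧
      ∀ a ∈ A, ∀ b ∈ B, H.Adj a b) (ht : 0 < t) (m : ℕ) :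
    #((univ : Finset (Fin ℓ ↪ V)).filter fun f : Fin ℓ ↪ V =>
        m ≤ #(univ.filter fun i : Fin ℓ => f i ∈ heavySet H t (cnb H ⇑f (i : ℕ)))) ≤
      ℓ.choose m * ((t - 1) ^ m * Fintype.card V ^ (ℓ - m)) := by
  have hsub : (univ : Finset (Fin ℓ ↪ V)).filter (fun f : Fin ℓ ↪ V =>
      m ≤ #(univ.filter fun i : Fin ℓ => f i ∈ heavySet H t (cnb H ⇑f (i : ℕ)))) ⊆
      (powersetCard m (univ : Finset (Fin ℓ))).biUnion (fun P =>
        (univ : Finset (Fin ℓ ↪ V)).filter fun f : Fin ℓ ↪ V =>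
          ∀ i ∈ P, f i ∈ heavySet H t (cnb H ⇑f (i : ℕ))) := by
    intro f hf
    obtain ⟨Q, hQsub, hQcard⟩ := exists_subset_card_eq (mem_filter.mp hf).2
    apply mem_biUnion.mpr
    refine ⟨Q, mem_powersetCard.mpr ⟨subset_univ Q, hQcard⟩, mem_filter.mpr ⟨mem_univ _, ?_⟩⟩
    intro i hi
    exact (mem_filter.mp (hQsub hi)).2
  calc _ ≤ _ := card_le_card hsub
    _ ≤ ∑ P ∈ powersetCard m (univ : Finset (Fin ℓ)),
        #((univ : Finset (Fin ℓ ↪ V)).filter fun f : Fin ℓ ↪ V =>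
          ∀ i ∈ P, f i ∈ heavySet H t (cnb H ⇑f (i : ℕ))) := card_biUnion_le
    _ ≤ ∑ P ∈ powersetCard m (univ : Finset (Fin ℓ)),
        (t - 1) ^ m * Fintype.card V ^ (ℓ - m) := by
      apply sum_le_sum
      intro P hP
      have hPm : #P = m := (mem_powersetCard.mp hP).2
      have := card_FP_le hfree ht P
      rwa [hPm] at this
    _ = ℓ.choose m * ((t - 1) ^ m * Fintype.card V ^ (ℓ - m)) := by
      rw [sum_const, card_powersetCard, card_univ, Fintype.card_fin, smul_eq_mul]


noncomputable def Yf (H : SimpleGraph V) {ℓ : ℕ} (f : Fin ℓ ↪ V) : Finset V :=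
  cnb H ⇑f ℓ \ univ.map f

lemma orderings_card {ℓ : ℕ} {A : Finset V} (hA : #A = ℓ) :
    Nat.factorial ℓ ≤
      #((univ : Finset (Fin ℓ ↪ V)).filter fun f : Fin ℓ ↪ V => univ.map f = A) := by
  have hcA : Fintype.card {x // x ∈ A} = ℓ := by rw [Fintype.card_coe]; exact hA
  let e0 : Fin ℓ ≃ {x // x ∈ A} := (Fintype.equivFinOfCardEq hcA).symm
  have hfac : Nat.factorial ℓ = #(univ : Finset (Equiv.Perm (Fin ℓ))) := by
    rw [card_univ, Fintype.card_perm, Fintype.card_fin]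
  rw [hfac]
  apply card_le_card_of_injOn (fun σ : Equiv.Perm (Fin ℓ) =>
    σ.toEmbedding.trans (e0.toEmbedding.trans (Function.Embedding.subtype _)))
  · intro σ _
    rw [mem_coe, mem_filter]
    refine ⟨mem_univ _, ?_⟩
    apply eq_of_subset_of_card_le
    · intro v hv
      rw [mem_map] at hv
      obtain ⟨i, -, rfl⟩ := hv
      exact (e0 (σ i)).2
    · rw [card_map, card_univ, Fintype.card_fin, hA]
  · intro σ _ τ _ heq
    apply Equiv.ext
    intro i
    have h1 := congrArg (fun F : Fin ℓ ↪ V => F i) heq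
    simp only [Function.Embedding.trans_apply, Equiv.coe_toEmbedding,
      Function.Embedding.coe_subtype] at h1
    exact e0.injective (Subtype.ext h1)

lemma clique_count_le (H : SimpleGraph V) (ℓ : ℕ) :
    #(univ.filter fun S : Finset V => #S = 2 * ℓ ∧ H.IsClique (S : Set V))
        * ((2 * ℓ).choose ℓ * Nat.factorial ℓ)
      ≤ ∑ f : Fin ℓ ↪ V, (#(Yf H f)).choose ℓ := by
  set CL := univ.filter fun S : Finset V => #S = 2 * ℓ ∧ H.IsClique (S : Set V) with hCL
  set P2 := CL.sigma (fun S => (S.powersetCard ℓ).sigma (fun A =>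
    (univ : Finset (Fin ℓ ↪ V)).filter fun f : Fin ℓ ↪ V => univ.map f = A)) with hP2
  have h1 : #CL * ((2 * ℓ).choose ℓ * Nat.factorial ℓ) ≤ #P2 := by
    rw [hP2, card_sigma]
    have hS : ∀ S ∈ CL, (2 * ℓ).choose ℓ * Nat.factorial ℓ ≤
        #((S.powersetCard ℓ).sigma (fun A =>
          (univ : Finset (Fin ℓ ↪ V)).filter fun f : Fin ℓ ↪ V => univ.map f = A)) := by
      intro S hSmem
      rw [card_sigma]
      have hScard : #S = 2 * ℓ := (mem_filter.mp hSmem).2.1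
      calc (2 * ℓ).choose ℓ * Nat.factorial ℓ
          = ∑ _A ∈ S.powersetCard ℓ, Nat.factorial ℓ := by
            rw [sum_const, card_powersetCard, hScard, smul_eq_mul]
        _ ≤ _ := by
            apply sum_le_sum
            intro A hAmem
            exact orderings_card (mem_powersetCard.mp hAmem).2
    calc #CL * ((2 * ℓ).choose ℓ * Nat.factorial ℓ)
        = ∑ _S ∈ CL, (2 * ℓ).choose ℓ * Nat.factorial ℓ := by
          rw [sum_const, smul_eq_mul]
      _ ≤ _ := sum_le_sum hS
  have h2 : #P2 ≤ #((univ : Finset (Fin ℓ ↪ V)).sigma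
      (fun f : Fin ℓ ↪ V => (Yf H f).powersetCard ℓ)) := by
    apply card_le_card_of_injOn
      (fun p : (S : Finset V) × ((A : Finset V) × (Fin ℓ ↪ V)) =>
        (⟨p.2.2, p.1 \ p.2.1⟩ : (f : Fin ℓ ↪ V) × Finset V))
    · rintro ⟨S, A, f⟩ hp
      rw [mem_coe, mem_sigma, mem_sigma] at hp
      obtain ⟨hSmem, hAmem, hfmem⟩ := hp
      have hAS : A ⊆ S := (mem_powersetCard.mp hAmem).1
      have hAcard : #A = ℓ := (mem_powersetCard.mp hAmem).2
      have hScard : #S = 2 * ℓ := (mem_filter.mp hSmem).2.1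
      have hclique : H.IsClique (S : Set V) := (mem_filter.mp hSmem).2.2
      have hmapA : univ.map f = A := (mem_filter.mp hfmem).2
      dsimp only
      rw [mem_coe, mem_sigma]
      refine ⟨mem_univ _, mem_powersetCard.mpr ⟨?_, ?_⟩⟩
      · intro b hb
        rw [mem_sdiff] at hb
        obtain ⟨hbS, hbA⟩ := hb
        rw [Yf, mem_sdiff, hmapA]
        refine ⟨?_, hbA⟩
        rw [cnb, mem_filter]
        refine ⟨mem_univ _, ?_⟩
        intro j _
        have hfj : f j ∈ A := by
          rw [← hmapA]
          exact mem_map_of_mem f (mem_univ j)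
        have hne : f j ≠ b := fun h => hbA (h ▸ hfj)
        exact hclique (hAS hfj) hbS hne
      · rw [card_sdiff_of_subset hAS, hScard, hAcard]
        omega
    · rintro ⟨S, A, f⟩ hp ⟨S', A', f'⟩ hq heq
      rw [mem_coe, hP2, mem_sigma, mem_sigma] at hp hq
      obtain ⟨hSmem, hAmem, hfmem⟩ := hp
      obtain ⟨hSmem', hAmem', hfmem'⟩ := hq
      dsimp only at heq hSmem hAmem hfmem hSmem' hAmem' hfmem'
      obtain ⟨hff, hdiff⟩ := Sigma.mk.inj_iff.mp heq
      have hdiff' : S \ A = S' \ A' := eq_of_heq hdiff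
      have hAeq : A = A' := by
        rw [← (mem_filter.mp hfmem).2, ← (mem_filter.mp hfmem').2, hff]
      have hSeq : S = S' := by
        rw [← union_sdiff_of_subset (mem_powersetCard.mp hAmem).1,
          ← union_sdiff_of_subset (mem_powersetCard.mp hAmem').1, hdiff', hAeq]
      subst hAeq hSeq hff
      rfl
  have h3 : #((univ : Finset (Fin ℓ ↪ V)).sigma
      (fun f : Fin ℓ ↪ V => (Yf H f).powersetCard ℓ))
      = ∑ f : Fin ℓ ↪ V, (#(Yf H f)).choose ℓ := by
    rw [card_sigma]
    apply sum_congr rfl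
    intro f _
    rw [card_powersetCard]
  omega


lemma descFactorial_mul_pow_le {y n : ℕ} (h : y ≤ n) (k : ℕ) :
    y.descFactorial k * n ^ k ≤ n.descFactorial k * y ^ k := by
  induction k with
  | zero => simp
  | succ k ih =>
    rw [Nat.descFactorial_succ, Nat.descFactorial_succ, pow_succ, pow_succ]
    have h1 : (y - k) * n ≤ (n - k) * y := by
      rcases le_or_gt y k with hyk | hyk
      · have : y - k = 0 := by omega
        simp [this]
      · rw [Nat.sub_mul, Nat.sub_mul]
        have h2 : k * y ≤ k * n := Nat.mul_le_mul_left k h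
        have h3 : y * n = n * y := mul_comm y n
        omega
    calc (y - k) * y.descFactorial k * (n ^ k * n)
        = ((y - k) * n) * (y.descFactorial k * n ^ k) := by ring
      _ ≤ ((n - k) * y) * (n.descFactorial k * y ^ k) := Nat.mul_le_mul h1 ih
      _ = (n - k) * n.descFactorial k * (y ^ k * y) := by ring

lemma choose_mul_pow_le {y n : ℕ} (h : y ≤ n) (k : ℕ) :
    y.choose k * n ^ k ≤ n.choose k * y ^ k := by
  have h1 := descFactorial_mul_pow_le h k
  rw [Nat.descFactorial_eq_factorial_mul_choose, Nat.descFactorial_eq_factorial_mul_choose] at h1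
  have h2 : k.factorial * (y.choose k * n ^ k) ≤ k.factorial * (n.choose k * y ^ k) := by
    calc k.factorial * (y.choose k * n ^ k) = k.factorial * y.choose k * n ^ k := by ring
      _ ≤ k.factorial * n.choose k * y ^ k := h1
      _ = k.factorial * (n.choose k * y ^ k) := by ring
  exact Nat.le_of_mul_le_mul_left h2 (Nat.factorial_pos k)

lemma E1_choose_bound {κ t ℓ y : ℕ} (hℓ : 0 < ℓ) (hlt : ℓ < t) (htκ : 16 * t ≤ κ)
    (hy : 8 * t * y + κ * ℓ ≤ 8 * t * κ) (hyn : y ≤ κ - ℓ) :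
    ((y.choose ℓ : ℝ)) ≤ Real.exp (-(ℓ : ℝ) ^ 2 / (16 * t)) * ((κ - ℓ).choose ℓ) := by
  set n := κ - ℓ with hn
  have hℓκ : ℓ ≤ κ := by omega
  have hnℝ : (n : ℝ) = (κ : ℝ) - ℓ := by
    rw [hn, Nat.cast_sub hℓκ]
  have ht0 : (0 : ℝ) < t := by exact_mod_cast (by omega : 0 < t)
  have h16t : (0 : ℝ) < 16 * t := by linarith
  have hn0 : (0 : ℝ) < n := by
    have : 15 * t ≤ n := by omega
    have := (by exact_mod_cast this : (15 : ℝ) * t ≤ n)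
    linarith
  have hκℝ : (16 : ℝ) * t ≤ κ := by exact_mod_cast htκ
  have hℓt : (ℓ : ℝ) < t := by exact_mod_cast hlt
  have hℓ0 : (0 : ℝ) < ℓ := by exact_mod_cast hℓ
  -- key: y ≤ (1 - ℓ/(16t)) * n
  have h2 : (y : ℝ) * (16 * t) ≤ ((16 * t : ℝ) - ℓ) * n := by
    have hyℝ : (8 : ℝ) * t * y + κ * ℓ ≤ 8 * t * κ := by exact_mod_cast hy
    rw [hnℝ]
    nlinarith [mul_le_mul_of_nonneg_right hκℝ (le_of_lt hℓ0)]
  have hyc : (y : ℝ) ≤ (1 - (ℓ : ℝ) / (16 * t)) * n := by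
    rw [← mul_le_mul_iff_of_pos_right h16t]
    calc (y : ℝ) * (16 * t) ≤ ((16 * t : ℝ) - ℓ) * n := h2
      _ = (1 - (ℓ : ℝ) / (16 * t)) * n * (16 * t) := by field_simp
  have hc0 : (0 : ℝ) ≤ 1 - (ℓ : ℝ) / (16 * t) := by
    rw [sub_nonneg, div_le_one h16t]
    linarith
  have h1 : (y.choose ℓ : ℝ) * (n : ℝ) ^ ℓ ≤ (n.choose ℓ : ℝ) * (y : ℝ) ^ ℓ := by
    exact_mod_cast choose_mul_pow_le hyn ℓ
  have h4 : (y : ℝ) ^ ℓ ≤ ((1 - (ℓ : ℝ) / (16 * t)) * n) ^ ℓ :=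
    pow_le_pow_left₀ (Nat.cast_nonneg y) hyc ℓ
  have h5 : ((1 - (ℓ : ℝ) / (16 * t)) * n) ^ ℓ
      = (1 - (ℓ : ℝ) / (16 * t)) ^ ℓ * (n : ℝ) ^ ℓ := mul_pow _ _ _
  have h6 : (1 - (ℓ : ℝ) / (16 * t)) ^ ℓ ≤ Real.exp (-(ℓ : ℝ) / (16 * t)) ^ ℓ := by
    apply pow_le_pow_left₀ hc0
    rw [neg_div]
    have := Real.add_one_le_exp (-((ℓ : ℝ) / (16 * t)))
    linarith
  have h7 : Real.exp (-(ℓ : ℝ) / (16 * t)) ^ ℓ = Real.exp (-(ℓ : ℝ) ^ 2 / (16 * t)) := by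
    rw [← Real.exp_nat_mul]
    congr 1
    field_simp
  -- combine
  have h8 : (y.choose ℓ : ℝ) * (n : ℝ) ^ ℓ ≤
      (Real.exp (-(ℓ : ℝ) ^ 2 / (16 * t)) * (n.choose ℓ : ℝ)) * (n : ℝ) ^ ℓ := by
    calc (y.choose ℓ : ℝ) * (n : ℝ) ^ ℓ ≤ (n.choose ℓ : ℝ) * (y : ℝ) ^ ℓ := h1
      _ ≤ (n.choose ℓ : ℝ) * ((1 - (ℓ : ℝ) / (16 * t)) ^ ℓ * (n : ℝ) ^ ℓ) := by
          rw [← h5]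
          exact mul_le_mul_of_nonneg_left h4 (Nat.cast_nonneg _)
      _ ≤ (n.choose ℓ : ℝ) * (Real.exp (-(ℓ : ℝ) ^ 2 / (16 * t)) * (n : ℝ) ^ ℓ) := by
          apply mul_le_mul_of_nonneg_left _ (Nat.cast_nonneg _)
          rw [← h7]
          exact mul_le_mul_of_nonneg_right h6 (pow_nonneg (le_of_lt hn0) ℓ)
      _ = (Real.exp (-(ℓ : ℝ) ^ 2 / (16 * t)) * (n.choose ℓ : ℝ)) * (n : ℝ) ^ ℓ := by ring
  exact le_of_mul_le_mul_right h8 (pow_pos hn0 ℓ)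

lemma E2_numeric {κ t ℓ : ℕ} (hℓ : 0 < ℓ) (hlt : ℓ < t) (htκ : 16 * t ≤ κ) :
    ((ℓ.choose ((ℓ + 1) / 2) * ((t - 1) ^ ((ℓ + 1) / 2) * κ ^ (ℓ - (ℓ + 1) / 2)) : ℕ) : ℝ) ≤
      Real.exp (-(ℓ : ℝ) ^ 2 / (16 * t)) * (κ.descFactorial ℓ) := by
  set m := (ℓ + 1) / 2 with hm
  have hm1 : ℓ ≤ 2 * m := by omega
  have hm2 : m ≤ ℓ := by omega
  have hch : ℓ.choose m ≤ 2 ^ ℓ := by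
    calc ℓ.choose m ≤ ∑ i ∈ range (ℓ + 1), ℓ.choose i :=
          single_le_sum (f := fun i => ℓ.choose i) (fun i _ => Nat.zero_le _)
            (mem_range.mpr (by omega))
      _ = 2 ^ ℓ := Nat.sum_range_choose ℓ
  have hdesc : (κ - ℓ) ^ ℓ ≤ κ.descFactorial ℓ := by
    calc (κ - ℓ) ^ ℓ ≤ (κ + 1 - ℓ) ^ ℓ := Nat.pow_le_pow_left (by omega) ℓ
      _ ≤ κ.descFactorial ℓ := Nat.pow_sub_le_descFactorial κ ℓ
  have hκ0 : (0 : ℝ) ≤ κ := Nat.cast_nonneg κ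
  have ht0 : (0 : ℝ) < t := by exact_mod_cast (by omega : 0 < t)
  have hκℝ : (16 : ℝ) * t ≤ κ := by exact_mod_cast htκ
  have hℓκ : 16 * ℓ ≤ κ := by omega
  have hℓκℝ : (16 : ℝ) * ℓ ≤ κ := by exact_mod_cast hℓκ
  have hℓt : (ℓ : ℝ) ≤ t := by exact_mod_cast le_of_lt hlt
  have hℓ0 : (0 : ℝ) < ℓ := by exact_mod_cast hℓ
  have hexp1 : (15 : ℝ) / 16 ≤ Real.exp (-(1 : ℝ) / 16) := by
    have := Real.add_one_le_exp (-(1 : ℝ) / 16)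
    linarith
  have hexp0 : (0 : ℝ) < Real.exp (-(1 : ℝ) / 16) := Real.exp_pos _
  -- step A: cast bound
  have stepA : ((ℓ.choose m * ((t - 1) ^ m * κ ^ (ℓ - m)) : ℕ) : ℝ)
      ≤ (2 : ℝ) ^ ℓ * ((t : ℝ) ^ m * (κ : ℝ) ^ (ℓ - m)) := by
    push_cast
    have c1 : ((ℓ.choose m : ℕ) : ℝ) ≤ (2 : ℝ) ^ ℓ := by exact_mod_cast hch
    have c2 : (((t - 1 : ℕ) : ℝ)) ^ m ≤ (t : ℝ) ^ m := by
      apply pow_le_pow_left₀ (Nat.cast_nonneg _)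
      exact_mod_cast Nat.sub_le t 1
    have c3 : (0:ℝ) ≤ ((t - 1 : ℕ) : ℝ) ^ m * (κ : ℝ) ^ (ℓ - m) := by positivity
    calc ((ℓ.choose m : ℕ) : ℝ) * (((t - 1 : ℕ) : ℝ) ^ m * (κ : ℝ) ^ (ℓ - m))
        ≤ (2 : ℝ) ^ ℓ * (((t - 1 : ℕ) : ℝ) ^ m * (κ : ℝ) ^ (ℓ - m)) :=
          mul_le_mul_of_nonneg_right c1 c3
      _ ≤ (2 : ℝ) ^ ℓ * ((t : ℝ) ^ m * (κ : ℝ) ^ (ℓ - m)) := by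
          apply mul_le_mul_of_nonneg_left _ (by positivity)
          exact mul_le_mul_of_nonneg_right c2 (by positivity)
  -- step B: t^m κ^(ℓ-m) ≤ κ^ℓ (1/16)^m
  have stepB : (t : ℝ) ^ m * (κ : ℝ) ^ (ℓ - m) ≤ (κ : ℝ) ^ ℓ * (1 / 16 : ℝ) ^ m := by
    have c1 : (t : ℝ) ≤ (κ : ℝ) * (1 / 16) := by linarith
    have c2 : (t : ℝ) ^ m ≤ ((κ : ℝ) * (1 / 16)) ^ m :=
      pow_le_pow_left₀ (le_of_lt ht0) c1 m
    have c3 : ((κ : ℝ) * (1 / 16)) ^ m = (κ : ℝ) ^ m * (1 / 16 : ℝ) ^ m := mul_pow _ _ _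
    have c4 : (κ : ℝ) ^ m * (κ : ℝ) ^ (ℓ - m) = (κ : ℝ) ^ ℓ := by
      rw [← pow_add]
      congr 1
      omega
    calc (t : ℝ) ^ m * (κ : ℝ) ^ (ℓ - m)
        ≤ (κ : ℝ) ^ m * (1 / 16 : ℝ) ^ m * (κ : ℝ) ^ (ℓ - m) := by
          rw [← c3]
          exact mul_le_mul_of_nonneg_right c2 (by positivity)
      _ = (κ : ℝ) ^ ℓ * (1 / 16 : ℝ) ^ m := by rw [← c4]; ring
  -- step C: (1/16)^m ≤ (1/4)^ℓ
  have stepC : ((1 : ℝ) / 16) ^ m ≤ ((1 : ℝ) / 4) ^ ℓ := by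
    have c1 : ((1 : ℝ) / 16) ^ m = ((1 : ℝ) / 4) ^ (2 * m) := by
      rw [pow_mul]
      norm_num
    rw [c1]
    exact pow_le_pow_of_le_one (by norm_num) (by norm_num) hm1
  -- step D: 2^ℓ κ^ℓ (1/4)^ℓ = (κ/2)^ℓ ≤ (exp(-1/16) (15/16) κ)^ℓ ≤ exp(-ℓ/16) (κ-ℓ)^ℓ
  have stepD : (2 : ℝ) ^ ℓ * ((κ : ℝ) ^ ℓ * ((1 : ℝ) / 4) ^ ℓ) ≤
      Real.exp (-(ℓ : ℝ) / 16) * (((κ - ℓ : ℕ) : ℝ)) ^ ℓ := by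
    have c1 : (2 : ℝ) ^ ℓ * ((κ : ℝ) ^ ℓ * ((1 : ℝ) / 4) ^ ℓ) = ((κ : ℝ) / 2) ^ ℓ := by
      rw [← mul_pow, ← mul_pow]
      congr 1
      ring
    have hcast : ((κ - ℓ : ℕ) : ℝ) = (κ : ℝ) - ℓ := by
      push_cast [show ℓ ≤ κ by omega]
      ring
    have c2 : (κ : ℝ) / 2 ≤ Real.exp (-(1 : ℝ) / 16) * ((15 / 16) * κ) := by
      nlinarith
    have c3 : Real.exp (-(1 : ℝ) / 16) * ((15 / 16) * κ) ≤
        Real.exp (-(1 : ℝ) / 16) * (((κ - ℓ : ℕ) : ℝ)) := by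
      apply mul_le_mul_of_nonneg_left _ (le_of_lt hexp0)
      rw [hcast]
      linarith
    have c4 : ((κ : ℝ) / 2) ^ ℓ ≤ (Real.exp (-(1 : ℝ) / 16) * (((κ - ℓ : ℕ) : ℝ))) ^ ℓ := by
      apply pow_le_pow_left₀ (by positivity)
      exact c2.trans c3
    have c5 : (Real.exp (-(1 : ℝ) / 16) * (((κ - ℓ : ℕ) : ℝ))) ^ ℓ
        = Real.exp (-(1 : ℝ) / 16) ^ ℓ * (((κ - ℓ : ℕ) : ℝ)) ^ ℓ := mul_pow _ _ _
    have c6 : Real.exp (-(1 : ℝ) / 16) ^ ℓ = Real.exp (-(ℓ : ℝ) / 16) := by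
      rw [← Real.exp_nat_mul]
      congr 1
      ring
    rw [c1]
    calc ((κ : ℝ) / 2) ^ ℓ ≤ _ := c4
      _ = Real.exp (-(ℓ : ℝ) / 16) * (((κ - ℓ : ℕ) : ℝ)) ^ ℓ := by rw [c5, c6]
  -- step E: exp(-ℓ/16) ≤ exp(-ℓ²/(16t)), (κ-ℓ)^ℓ ≤ descFactorial
  have stepE : Real.exp (-(ℓ : ℝ) / 16) * (((κ - ℓ : ℕ) : ℝ)) ^ ℓ ≤
      Real.exp (-(ℓ : ℝ) ^ 2 / (16 * t)) * (κ.descFactorial ℓ : ℝ) := by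
    have c1 : Real.exp (-(ℓ : ℝ) / 16) ≤ Real.exp (-(ℓ : ℝ) ^ 2 / (16 * t)) := by
      apply Real.exp_le_exp.mpr
      rw [div_le_div_iff₀ (by norm_num) (by positivity)]
      nlinarith
    have c2 : (((κ - ℓ : ℕ) : ℝ)) ^ ℓ ≤ (κ.descFactorial ℓ : ℝ) := by
      exact_mod_cast hdesc
    have c3 : (0:ℝ) ≤ (((κ - ℓ : ℕ) : ℝ)) ^ ℓ := by positivity
    calc Real.exp (-(ℓ : ℝ) / 16) * (((κ - ℓ : ℕ) : ℝ)) ^ ℓ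
        ≤ Real.exp (-(ℓ : ℝ) ^ 2 / (16 * t)) * (((κ - ℓ : ℕ) : ℝ)) ^ ℓ :=
          mul_le_mul_of_nonneg_right c1 c3
      _ ≤ _ := mul_le_mul_of_nonneg_left c2 (le_of_lt (Real.exp_pos _))
  calc ((ℓ.choose m * ((t - 1) ^ m * κ ^ (ℓ - m)) : ℕ) : ℝ)
      ≤ (2 : ℝ) ^ ℓ * ((t : ℝ) ^ m * (κ : ℝ) ^ (ℓ - m)) := stepA
    _ ≤ (2 : ℝ) ^ ℓ * ((κ : ℝ) ^ ℓ * (1 / 16 : ℝ) ^ m) := by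
        apply mul_le_mul_of_nonneg_left _ (by positivity)
        calc (t : ℝ) ^ m * (κ : ℝ) ^ (ℓ - m) ≤ (κ : ℝ) ^ ℓ * (1 / 16 : ℝ) ^ m := stepB
          _ ≤ _ := le_refl _
    _ ≤ (2 : ℝ) ^ ℓ * ((κ : ℝ) ^ ℓ * ((1 : ℝ) / 4) ^ ℓ) := by
        apply mul_le_mul_of_nonneg_left _ (by positivity)
        exact mul_le_mul_of_nonneg_left stepC (by positivity)
    _ ≤ Real.exp (-(ℓ : ℝ) / 16) * (((κ - ℓ : ℕ) : ℝ)) ^ ℓ := stepD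
    _ ≤ _ := stepE

end Stmt13


/-- In a `K_{t,t}`-free graph `H` on `κ` vertices (with `ℓ < t`, `16t ≤ κ`), the number of
`2ℓ`-element vertex subsets inducing a clique is at most
`(2·e^(−ℓ²/(16t)))·C(κ,ℓ)·C(κ−ℓ,ℓ)/C(2ℓ,ℓ)`. -/
theorem stmt_13 {V : Type} [Fintype V] (κ t ℓ : ℕ) (hℓ : 0 < ℓ) (hlt : ℓ < t)
    (htκ : 16 * t ≤ κ) (H : SimpleGraph V) (hκ : Fintype.card V = κ)
    (hfree : ¬ ∃ A B : Finset V, Disjoint A B ∧ A.card = t ∧ B.card = t ∧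
      ∀ a ∈ A, ∀ b ∈ B, H.Adj a b) :
    (Nat.card {S : Finset V // S.card = 2 * ℓ ∧ H.IsClique (S : Set V)} : ℝ)
      ≤ 2 * Real.exp (-(ℓ : ℝ) ^ 2 / (16 * t)) * (κ.choose ℓ) * ((κ - ℓ).choose ℓ)
          / ((2 * ℓ).choose ℓ) := by
  subst hκ
  have ht : 0 < t := lt_trans hℓ hlt
  have hℓκ : ℓ ≤ Fintype.card V := by omega
  set m := (ℓ + 1) / 2 with hm
  set CL := univ.filter (fun S : Finset V => #S = 2 * ℓ ∧ H.IsClique (S : Set V)) with hCL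
  have hN : (Nat.card {S : Finset V // S.card = 2 * ℓ ∧ H.IsClique (S : Set V)}) = #CL := by
    rw [Nat.card_eq_fintype_card, hCL]
    exact Fintype.card_subtype _
  have hYcard : ∀ f : Fin ℓ ↪ V, #(Stmt13.Yf H f) ≤ Fintype.card V - ℓ := by
    intro f
    have h1 : Stmt13.Yf H f ⊆ univ \ univ.map f :=
      sdiff_subset_sdiff (subset_univ _) (Finset.Subset.refl _)
    have h2 := card_le_card h1
    rwa [card_sdiff_of_subset (subset_univ _), card_map, card_univ, card_univ, Fintype.card_fin] at h2
  have step1 := Stmt13.clique_count_le H ℓ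
  rw [← hCL] at step1
  set p := fun f : Fin ℓ ↪ V =>
    m ≤ #(univ.filter fun i : Fin ℓ => f i ∈ Stmt13.heavySet H t (Stmt13.cnb H ⇑f (i : ℕ)))
    with hp
  set E := Real.exp (-(ℓ : ℝ) ^ 2 / (16 * t)) with hE
  have hEpos : 0 < E := Real.exp_pos _
  set Cn := (((Fintype.card V - ℓ).choose ℓ : ℕ) : ℝ) with hCn
  have hCn0 : 0 ≤ Cn := Nat.cast_nonneg _
  set desc := (((Fintype.card V).descFactorial ℓ : ℕ) : ℝ) with hdesc
  have hdesc0 : 0 ≤ desc := Nat.cast_nonneg _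
  -- heavy part
  have hb1 : ((∑ f ∈ univ.filter p, (#(Stmt13.Yf H f)).choose ℓ : ℕ) : ℝ) ≤
      E * desc * Cn := by
    have hsum : (∑ f ∈ univ.filter p, (#(Stmt13.Yf H f)).choose ℓ) ≤
        #(univ.filter p) * ((Fintype.card V - ℓ).choose ℓ) := by
      calc (∑ f ∈ univ.filter p, (#(Stmt13.Yf H f)).choose ℓ)
          ≤ #(univ.filter p) • ((Fintype.card V - ℓ).choose ℓ) :=
            sum_le_card_nsmul _ _ _ (fun f _ => Nat.choose_le_choose ℓ (hYcard f))
        _ = _ := by rw [smul_eq_mul]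
    have hcard : #(univ.filter p) ≤ ℓ.choose m * ((t - 1) ^ m * (Fintype.card V) ^ (ℓ - m)) :=
      Stmt13.card_E2_le (H := H) (ℓ := ℓ) hfree ht m
    have hnum := Stmt13.E2_numeric (κ := Fintype.card V) hℓ hlt htκ
    calc ((∑ f ∈ univ.filter p, (#(Stmt13.Yf H f)).choose ℓ : ℕ) : ℝ)
        ≤ ((#(univ.filter p) * ((Fintype.card V - ℓ).choose ℓ) : ℕ) : ℝ) := by
          exact_mod_cast hsum
      _ ≤ ((ℓ.choose m * ((t - 1) ^ m * (Fintype.card V) ^ (ℓ - m)) : ℕ) : ℝ) * Cn := by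
          push_cast
          apply mul_le_mul_of_nonneg_right _ (Nat.cast_nonneg _)
          exact_mod_cast hcard
      _ ≤ E * desc * Cn := mul_le_mul_of_nonneg_right hnum hCn0
  -- light part
  have hb2 : ((∑ f ∈ univ.filter (fun f => ¬ p f), (#(Stmt13.Yf H f)).choose ℓ : ℕ) : ℝ) ≤
      desc * (E * Cn) := by
    have hper : ∀ f ∈ univ.filter (fun f => ¬ p f),
        (((#(Stmt13.Yf H f)).choose ℓ : ℕ) : ℝ) ≤ E * Cn := by
      intro f hf
      have hnp : ¬ p f := (mem_filter.mp hf).2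
      rw [hp] at hnp
      push_neg at hnp
      have hfew : 2 * #(univ.filter fun i : Fin ℓ =>
          f i ∈ Stmt13.heavySet H t (Stmt13.cnb H ⇑f (i : ℕ))) ≤ ℓ := by omega
      have hsmall := Stmt13.few_heavy_small_cnb hℓ (le_of_lt hlt) htκ ⇑f hfew
      have hsub : #(Stmt13.Yf H f) ≤ #(Stmt13.cnb H ⇑f ℓ) :=
        card_le_card (sdiff_subset)
      have h8 : 8 * t * #(Stmt13.Yf H f) ≤ 8 * t * #(Stmt13.cnb H ⇑f ℓ) :=
        Nat.mul_le_mul_left _ hsub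
      have hy : 8 * t * #(Stmt13.Yf H f) + Fintype.card V * ℓ ≤
          8 * t * Fintype.card V := by omega
      exact Stmt13.E1_choose_bound hℓ hlt htκ hy (hYcard f)
    have hcnt : #(univ.filter (fun f : Fin ℓ ↪ V => ¬ p f)) ≤
        (Fintype.card V).descFactorial ℓ := by
      have h1 : #(univ.filter (fun f : Fin ℓ ↪ V => ¬ p f)) ≤ #(univ : Finset (Fin ℓ ↪ V)) :=
        card_le_card (filter_subset _ _)
      rwa [card_univ, Fintype.card_embedding_eq, Fintype.card_fin] at h1
    calc ((∑ f ∈ univ.filter (fun f => ¬ p f), (#(Stmt13.Yf H f)).choose ℓ : ℕ) : ℝ)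
        = ∑ f ∈ univ.filter (fun f => ¬ p f), (((#(Stmt13.Yf H f)).choose ℓ : ℕ) : ℝ) := by
          push_cast
          rfl
      _ ≤ #(univ.filter (fun f : Fin ℓ ↪ V => ¬ p f)) • (E * Cn) :=
          sum_le_card_nsmul _ _ _ hper
      _ = (#(univ.filter (fun f : Fin ℓ ↪ V => ¬ p f)) : ℝ) * (E * Cn) := by
          rw [nsmul_eq_mul]
      _ ≤ desc * (E * Cn) := by
          apply mul_le_mul_of_nonneg_right _ (by positivity)
          rw [hdesc]
          exact_mod_cast hcnt
  -- combine
  have hsplitsum : (∑ f : Fin ℓ ↪ V, (#(Stmt13.Yf H f)).choose ℓ) =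
      (∑ f ∈ univ.filter p, (#(Stmt13.Yf H f)).choose ℓ) +
      (∑ f ∈ univ.filter (fun f => ¬ p f), (#(Stmt13.Yf H f)).choose ℓ) :=
    (sum_filter_add_sum_filter_not univ p _).symm
  have main : ((#CL * ((2 * ℓ).choose ℓ * ℓ.factorial) : ℕ) : ℝ) ≤ 2 * E * desc * Cn := by
    calc ((#CL * ((2 * ℓ).choose ℓ * ℓ.factorial) : ℕ) : ℝ)
        ≤ ((∑ f : Fin ℓ ↪ V, (#(Stmt13.Yf H f)).choose ℓ : ℕ) : ℝ) := by
          exact_mod_cast step1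
      _ = ((∑ f ∈ univ.filter p, (#(Stmt13.Yf H f)).choose ℓ : ℕ) : ℝ) +
          ((∑ f ∈ univ.filter (fun f => ¬ p f), (#(Stmt13.Yf H f)).choose ℓ : ℕ) : ℝ) := by
          rw [hsplitsum]
          push_cast
          ring
      _ ≤ E * desc * Cn + desc * (E * Cn) := add_le_add hb1 hb2
      _ = 2 * E * desc * Cn := by ring
  rw [hN]
  have hC2 : (0 : ℝ) < (((2 * ℓ).choose ℓ : ℕ) : ℝ) := by
    exact_mod_cast Nat.choose_pos (by omega : ℓ ≤ 2 * ℓ)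
  have hfac : (0 : ℝ) < ((ℓ.factorial : ℕ) : ℝ) := by
    exact_mod_cast Nat.factorial_pos ℓ
  rw [le_div_iff₀ hC2]
  apply le_of_mul_le_mul_right _ hfac
  have hdesc_eq : desc = ((ℓ.factorial : ℕ) : ℝ) * (((Fintype.card V).choose ℓ : ℕ) : ℝ) := by
    rw [hdesc]
    exact_mod_cast Nat.descFactorial_eq_factorial_mul_choose _ _
  calc (#CL : ℝ) * (((2 * ℓ).choose ℓ : ℕ) : ℝ) * ((ℓ.factorial : ℕ) : ℝ)
      = ((#CL * ((2 * ℓ).choose ℓ * ℓ.factorial) : ℕ) : ℝ) := by push_cast; ring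
    _ ≤ 2 * E * desc * Cn := main
    _ = 2 * E * (((Fintype.card V).choose ℓ : ℕ) : ℝ) * Cn * ((ℓ.factorial : ℕ) : ℝ) := by
        rw [hdesc_eq]; ring
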